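/- Let n be an odd natural number. Suppose (a_k)_{0 ≤ k ≤ ⌊n/2⌋} and (b_k)_{0 ≤ k ≤ (n+1)/2} are families of rational numbers such that for all complex x, y: x^n + y^n = (x+y) · ∑_{k=0}^{⌊n/2⌋} a_k (xy)^(⌊n/2⌋−k)(x²+y²)^k and x^(n+1) + y^(n+1) = ∑_{k=0}^{(n+1)/2} b_k (xy)^((n+1)/2−k)(x²+y²)^k. Then for every k with 0 ≤ k ≤ ⌊n/2⌋: (n+1) · a_k = 2·(k+1) · b_{k+1} + ((n+1)/2 − k) · b_k. -/

import Mathlib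

/-- For every complex `v` there are `x, y` with `x * y = 1`, `x ^ 2 + y ^ 2 = v`,
and `x + y = 0` only when `v = -2`. -/
private lemma psi_exists_xy (v : ℂ) :
    ∃ x y : ℂ, x * y = 1 ∧ x ^ 2 + y ^ 2 = v ∧ (x + y = 0 → v = -2) := by
  obtain ⟨w, hw⟩ := IsAlgClosed.exists_pow_nat_eq (v ^ 2 - 4) (n := 2) two_pos
  have hs : ((v + w) / 2) ^ 2 - v * ((v + w) / 2) + 1 = 0 := by linear_combination hw / 4
  set s : ℂ := (v + w) / 2 with hsdef
  have hs0 : s ≠ 0 := by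
    intro h
    rw [h] at hs
    simp at hs
  obtain ⟨x, hx⟩ := IsAlgClosed.exists_pow_nat_eq s (n := 2) two_pos
  have hx0 : x ≠ 0 := by
    intro h
    apply hs0
    rw [← hx, h]; ring
  have hss : s + s⁻¹ = v := by
    field_simp
    linear_combination hs
  have hxySq : x ^ 2 + (x⁻¹) ^ 2 = v := by
    rw [inv_pow, hx]; exact hss
  refine ⟨x, x⁻¹, mul_inv_cancel₀ hx0, hxySq, ?_⟩
  intro h
  have hinv : x⁻¹ = -x := by linear_combination h
  have hs1 : s = -1 := by
    have h1 : x * x⁻¹ = 1 := mul_inv_cancel₀ hx0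
    rw [hinv] at h1
    rw [← hx]
    linear_combination -h1
  rw [← hxySq, inv_pow, hx, hs1]
  norm_num

/-- A rational family whose polynomial vanishes on `ℂ \ {-2}` is zero. -/
private lemma psi_coeff_zero (N : ℕ) (c : ℕ → ℚ)
    (key : ∀ v : ℂ, v ≠ -2 → ∑ i ∈ Finset.range (N + 1), ((c i : ℚ) : ℂ) * v ^ i = 0) :
    ∀ k ≤ N, c k = 0 := by
  intro k hk
  set q : Polynomial ℂ :=
    ∑ i ∈ Finset.range (N + 1), Polynomial.C ((c i : ℚ) : ℂ) * Polynomial.X ^ i with hq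
  have hq0 : q = 0 := by
    apply Polynomial.eq_zero_of_infinite_isRoot
    apply Set.Infinite.mono (s := {(-2 : ℂ)}ᶜ)
    · intro v hv
      have := key v hv
      simp only [Set.mem_setOf_eq, Polynomial.IsRoot, hq, Polynomial.eval_finset_sum,
        Polynomial.eval_mul, Polynomial.eval_C, Polynomial.eval_pow, Polynomial.eval_X]
      exact this
    · exact (Set.finite_singleton _).infinite_compl
  have hc : ((c k : ℚ) : ℂ) = 0 := by
    have := congrArg (fun p => Polynomial.coeff p k) hq0
    simpa [hq, Polynomial.finset_sum_coeff, Polynomial.coeff_C_mul, Polynomial.coeff_X_pow,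
      Finset.sum_ite_eq', Finset.mem_range, Nat.lt_succ_iff, hk] using this
  exact_mod_cast hc

/-- The relation between the Ψ-coefficients of odd `n` and of `n + 1`. -/
theorem psi_odd_relation (n : ℕ) (hn : Odd n) (a b : ℕ → ℚ)
    (ha : ∀ x y : ℂ, x ^ n + y ^ n =
      (x + y) * ∑ k ∈ Finset.range (n / 2 + 1),
        (a k : ℂ) * (x * y) ^ (n / 2 - k) * (x ^ 2 + y ^ 2) ^ k)
    (hb : ∀ x y : ℂ, x ^ (n + 1) + y ^ (n + 1) =
      ∑ k ∈ Finset.range ((n + 1) / 2 + 1),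
        (b k : ℂ) * (x * y) ^ ((n + 1) / 2 - k) * (x ^ 2 + y ^ 2) ^ k) :
    ∀ k ≤ n / 2,
      ((n : ℚ) + 1) * a k =
        2 * ((k : ℚ) + 1) * b (k + 1) + ((((n + 1) / 2 : ℕ) : ℚ) - (k : ℚ)) * b k := by
  have hM : (n + 1) / 2 = n / 2 + 1 := by
    obtain ⟨t, ht⟩ := hn; omega
  -- derivative of `hb` in the first variable
  have hx_der : ∀ x y : ℂ, ((n : ℕ) + 1 : ℂ) * x ^ n =
      ∑ j ∈ Finset.range ((n + 1) / 2 + 1),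
        ((b j : ℂ) * ((((n + 1) / 2 - j : ℕ) : ℂ) * (x * y) ^ ((n + 1) / 2 - j - 1) * y) *
            (x ^ 2 + y ^ 2) ^ j
          + (b j : ℂ) * (x * y) ^ ((n + 1) / 2 - j) *
            (((j : ℕ) : ℂ) * (x ^ 2 + y ^ 2) ^ (j - 1) * (2 * x))) := by
    intro x y
    have h1 : HasDerivAt (fun t : ℂ => t * y) y x := by
      simpa using (hasDerivAt_id x).mul_const y
    have h2 : HasDerivAt (fun t : ℂ => t ^ 2 + y ^ 2) (2 * x) x := by
      simpa using (hasDerivAt_pow 2 x).add_const (y ^ 2)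
    have hG : HasDerivAt (fun t : ℂ => ∑ j ∈ Finset.range ((n + 1) / 2 + 1),
        (b j : ℂ) * (t * y) ^ ((n + 1) / 2 - j) * (t ^ 2 + y ^ 2) ^ j)
        (∑ j ∈ Finset.range ((n + 1) / 2 + 1),
          ((b j : ℂ) * ((((n + 1) / 2 - j : ℕ) : ℂ) * (x * y) ^ ((n + 1) / 2 - j - 1) * y) *
              (x ^ 2 + y ^ 2) ^ j
            + (b j : ℂ) * (x * y) ^ ((n + 1) / 2 - j) *
              (((j : ℕ) : ℂ) * (x ^ 2 + y ^ 2) ^ (j - 1) * (2 * x)))) x := by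
      apply HasDerivAt.fun_sum
      intro j _
      exact ((h1.pow _).const_mul _).mul (h2.pow _)
    have hF : HasDerivAt (fun t : ℂ => t ^ (n + 1) + y ^ (n + 1))
        (((n : ℕ) + 1 : ℂ) * x ^ n) x := by
      simpa using (hasDerivAt_pow (n + 1) x).add_const (y ^ (n + 1))
    have hFG : (fun t : ℂ => t ^ (n + 1) + y ^ (n + 1))
        = (fun t : ℂ => ∑ j ∈ Finset.range ((n + 1) / 2 + 1),
            (b j : ℂ) * (t * y) ^ ((n + 1) / 2 - j) * (t ^ 2 + y ^ 2) ^ j) :=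
      funext fun t => hb t y
    rw [hFG] at hF
    exact hF.unique hG
  -- derivative of `hb` in the second variable
  have hy_der : ∀ x y : ℂ, ((n : ℕ) + 1 : ℂ) * y ^ n =
      ∑ j ∈ Finset.range ((n + 1) / 2 + 1),
        ((b j : ℂ) * ((((n + 1) / 2 - j : ℕ) : ℂ) * (x * y) ^ ((n + 1) / 2 - j - 1) * x) *
            (x ^ 2 + y ^ 2) ^ j
          + (b j : ℂ) * (x * y) ^ ((n + 1) / 2 - j) *
            (((j : ℕ) : ℂ) * (x ^ 2 + y ^ 2) ^ (j - 1) * (2 * y))) := by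
    intro x y
    have h1 : HasDerivAt (fun t : ℂ => x * t) x y := by
      simpa using (hasDerivAt_id y).const_mul x
    have h2 : HasDerivAt (fun t : ℂ => x ^ 2 + t ^ 2) (2 * y) y := by
      simpa using (hasDerivAt_pow 2 y).const_add (x ^ 2)
    have hG : HasDerivAt (fun t : ℂ => ∑ j ∈ Finset.range ((n + 1) / 2 + 1),
        (b j : ℂ) * (x * t) ^ ((n + 1) / 2 - j) * (x ^ 2 + t ^ 2) ^ j)
        (∑ j ∈ Finset.range ((n + 1) / 2 + 1),
          ((b j : ℂ) * ((((n + 1) / 2 - j : ℕ) : ℂ) * (x * y) ^ ((n + 1) / 2 - j - 1) * x) *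
              (x ^ 2 + y ^ 2) ^ j
            + (b j : ℂ) * (x * y) ^ ((n + 1) / 2 - j) *
              (((j : ℕ) : ℂ) * (x ^ 2 + y ^ 2) ^ (j - 1) * (2 * y)))) y := by
      apply HasDerivAt.fun_sum
      intro j _
      exact ((h1.pow _).const_mul _).mul (h2.pow _)
    have hF : HasDerivAt (fun t : ℂ => x ^ (n + 1) + t ^ (n + 1))
        (((n : ℕ) + 1 : ℂ) * y ^ n) y := by
      simpa using (hasDerivAt_pow (n + 1) y).const_add (x ^ (n + 1))
    have hFG : (fun t : ℂ => x ^ (n + 1) + t ^ (n + 1))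
        = (fun t : ℂ => ∑ j ∈ Finset.range ((n + 1) / 2 + 1),
            (b j : ℂ) * (x * t) ^ ((n + 1) / 2 - j) * (x ^ 2 + t ^ 2) ^ j) :=
      funext fun t => hb x t
    rw [hFG] at hF
    exact hF.unique hG
  -- the coefficient polynomial vanishes away from `-2`
  have key : ∀ v : ℂ, v ≠ -2 → ∑ i ∈ Finset.range (n / 2 + 1),
      (((((n : ℚ) + 1) * a i
        - (2 * ((i : ℚ) + 1) * b (i + 1) + ((((n + 1) / 2 : ℕ) : ℚ) - (i : ℚ)) * b i)) : ℚ) : ℂ)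
        * v ^ i = 0 := by
    intro v hv
    obtain ⟨x, y, hxy, hS, himp⟩ := psi_exists_xy v
    have hu : x + y ≠ 0 := fun h => hv (himp h)
    have h1 := hx_der x y
    have h2 := hy_der x y
    have h3 := ha x y
    rw [hxy, hS] at h1 h2 h3
    simp only [one_pow, mul_one, one_mul] at h1 h2 h3
    have hsum12 : ((n : ℕ) + 1 : ℂ) * x ^ n + ((n : ℕ) + 1 : ℂ) * y ^ n
        = (x + y) * ∑ j ∈ Finset.range ((n + 1) / 2 + 1),
            (b j : ℂ) * ((((n + 1) / 2 - j : ℕ) : ℂ) * v ^ j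
              + ((j : ℕ) : ℂ) * v ^ (j - 1) * 2) := by
      rw [h1, h2, ← Finset.sum_add_distrib, Finset.mul_sum]
      exact Finset.sum_congr rfl fun j _ => by ring
    have hleft : ((n : ℕ) + 1 : ℂ) * x ^ n + ((n : ℕ) + 1 : ℂ) * y ^ n
        = (x + y) * (((n : ℕ) + 1 : ℂ) * ∑ i ∈ Finset.range (n / 2 + 1), (a i : ℂ) * v ^ i) := by
      have : ((n : ℕ) + 1 : ℂ) * x ^ n + ((n : ℕ) + 1 : ℂ) * y ^ n
          = ((n : ℕ) + 1 : ℂ) * (x ^ n + y ^ n) := by ring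
      rw [this, h3]; ring
    have hcancel := mul_left_cancel₀ hu (hleft.symm.trans hsum12)
    have hre : ∑ j ∈ Finset.range ((n + 1) / 2 + 1),
          (b j : ℂ) * ((((n + 1) / 2 - j : ℕ) : ℂ) * v ^ j + ((j : ℕ) : ℂ) * v ^ (j - 1) * 2)
        = ∑ i ∈ Finset.range (n / 2 + 1),
            ((2 * ((i : ℂ) + 1) * (b (i + 1) : ℂ)
              + ((((n + 1) / 2 : ℕ) : ℂ) - (i : ℂ)) * (b i : ℂ)) * v ^ i) := by
      simp only [mul_add, Finset.sum_add_distrib, hM]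
      rw [Finset.sum_range_succ (f := fun j => (b j : ℂ) * ((((n / 2 + 1 - j : ℕ)) : ℂ) * v ^ j)),
        Finset.sum_range_succ' (f := fun j => (b j : ℂ) * (((j : ℕ) : ℂ) * v ^ (j - 1) * 2))]
      simp only [Nat.sub_self, Nat.cast_zero, zero_mul, mul_zero, add_zero, zero_add,
        Nat.add_sub_cancel, CharP.cast_eq_zero]
      rw [add_comm, ← Finset.sum_add_distrib]
      refine Finset.sum_congr rfl fun i hi => ?_
      have hi' : i ≤ n / 2 := by
        have := Finset.mem_range.mp hi; omega
      rw [Nat.cast_sub (by omega : i ≤ n / 2 + 1)]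
      push_cast
      ring
    calc ∑ i ∈ Finset.range (n / 2 + 1),
        (((((n : ℚ) + 1) * a i
          - (2 * ((i : ℚ) + 1) * b (i + 1) + ((((n + 1) / 2 : ℕ) : ℚ) - (i : ℚ)) * b i)) : ℚ) : ℂ)
          * v ^ i
        = (((n : ℕ) + 1 : ℂ) * ∑ i ∈ Finset.range (n / 2 + 1), (a i : ℂ) * v ^ i)
          - ∑ i ∈ Finset.range (n / 2 + 1),
            ((2 * ((i : ℂ) + 1) * (b (i + 1) : ℂ)
              + ((((n + 1) / 2 : ℕ) : ℂ) - (i : ℂ)) * (b i : ℂ)) * v ^ i) := by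
          rw [Finset.mul_sum, ← Finset.sum_sub_distrib]
          refine Finset.sum_congr rfl fun i _ => ?_
          push_cast
          ring
      _ = 0 := by rw [hcancel, hre, sub_self]
  intro k hk
  have := psi_coeff_zero (n / 2)
    (fun i => ((n : ℚ) + 1) * a i
      - (2 * ((i : ℚ) + 1) * b (i + 1) + ((((n + 1) / 2 : ℕ) : ℚ) - (i : ℚ)) * b i))
    key k hk
  linarith [this]
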